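/- Let n = 2k and let f be a symmetric Boolean function on n variables. If AI(f) = k, then the Hamming weight of the simplified value vector v_f ∈ F₂^{n+1} is k or k+1. -/

import Mathlib

open scoped Classical

/-- Hamming weight of a Boolean vector. -/
def wtv {n : ℕ} (x : Fin n → ZMod 2) : ℕ := (Finset.univ.filter (fun i => x i = 1)).card

/-- A Boolean function is symmetric if invariant under permutations of inputs. -/
def SymmF {n : ℕ} (f : (Fin n → ZMod 2) → ZMod 2) : Prop :=
  ∀ σ : Equiv.Perm (Fin n), ∀ x, f (x ∘ σ) = f x

/-- The algebraic degree of a Boolean function: the least `d` such that `f` is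
represented by a polynomial of total degree at most `d`. -/
noncomputable def funcDeg {n : ℕ} (f : (Fin n → ZMod 2) → ZMod 2) : ℕ :=
  sInf {d | ∃ P : MvPolynomial (Fin n) (ZMod 2), P.totalDegree ≤ d ∧
    ∀ x, MvPolynomial.eval x P = f x}

/-- Algebraic immunity: the minimal degree of a nonzero annihilator of `f` or `f+1`. -/
noncomputable def AI {n : ℕ} (f : (Fin n → ZMod 2) → ZMod 2) : ℕ :=
  sInf {d | ∃ g : (Fin n → ZMod 2) → ZMod 2, g ≠ 0 ∧ funcDeg g = d ∧
    (f * g = 0 ∨ (f + 1) * g = 0)}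

lemma zmod2_cases (a : ZMod 2) : a = 0 ∨ a = 1 := by fin_cases a; exacts [Or.inl rfl, Or.inr rfl]
lemma eval_esymm {n : ℕ} (i : ℕ) (x : Fin n → ZMod 2) :
    MvPolynomial.eval x (MvPolynomial.esymm (Fin n) (ZMod 2) i)
      = ((wtv x).choose i : ZMod 2) := by
  classical
  rw [MvPolynomial.esymm, map_sum]
  have h1 : ∀ S : Finset (Fin n),
      MvPolynomial.eval x (∏ s ∈ S, MvPolynomial.X s)
        = if S ⊆ Finset.univ.filter (fun t => x t = 1) then (1 : ZMod 2) else 0 := by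
    intro S
    rw [map_prod]
    simp only [MvPolynomial.eval_X]
    split_ifs with h
    · exact Finset.prod_eq_one (fun s hs => (Finset.mem_filter.mp (h hs)).2)
    · obtain ⟨s, hs, hxs⟩ := Finset.not_subset.mp h
      have : x s = 0 := by
        rcases zmod2_cases (x s) with h0 | h1
        · exact h0
        · exact absurd (Finset.mem_filter.mpr ⟨Finset.mem_univ s, h1⟩) hxs
      exact Finset.prod_eq_zero hs this
  rw [Finset.sum_congr rfl (fun S _ => h1 S), Finset.sum_boole]
  congr 1
  have : (Finset.powersetCard i (Finset.univ : Finset (Fin n))).filter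
      (fun S => S ⊆ Finset.univ.filter (fun t => x t = 1))
      = Finset.powersetCard i (Finset.univ.filter (fun t => x t = 1)) := by
    ext S
    simp only [Finset.mem_filter, Finset.mem_powersetCard]
    constructor
    · rintro ⟨⟨-, hc⟩, hsub⟩; exact ⟨hsub, hc⟩
    · rintro ⟨hsub, hc⟩; exact ⟨⟨Finset.subset_univ S, hc⟩, hsub⟩
  rw [this, Finset.card_powersetCard]
  rfl
lemma esymm_totalDegree_le {n : ℕ} (i : ℕ) :
    (MvPolynomial.esymm (Fin n) (ZMod 2) i).totalDegree ≤ i := by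
  classical
  rw [MvPolynomial.esymm]
  apply MvPolynomial.totalDegree_finsetSum_le
  intro S hS
  calc (∏ s ∈ S, MvPolynomial.X s : MvPolynomial (Fin n) (ZMod 2)).totalDegree
      ≤ ∑ s ∈ S, (MvPolynomial.X s : MvPolynomial (Fin n) (ZMod 2)).totalDegree :=
        MvPolynomial.totalDegree_finset_prod S _
    _ = S.card := by simp [MvPolynomial.totalDegree_X]
    _ = i := (Finset.mem_powersetCard.mp hS).2
lemma card_filter_val_lt {n J : ℕ} (h : J ≤ n) :
    ((Finset.univ : Finset (Fin n)).filter (fun t : Fin n => (t : ℕ) < J)).card = J := by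
  rw [← Finset.card_range J]
  refine Finset.card_bij (fun t _ => (t : ℕ)) ?_ ?_ ?_
  · intro a ha; simp only [Finset.mem_filter] at ha; simpa using ha.2
  · intro a _ b _ hab; exact Fin.ext hab
  · intro b hb
    simp only [Finset.mem_range] at hb
    exact ⟨⟨b, lt_of_lt_of_le hb h⟩, by simp [hb], rfl⟩
lemma exists_annihilator {n : ℕ} (F : (Fin n → ZMod 2) → ZMod 2) (w : ℕ → ZMod 2)
    (hw : ∀ x, F x = w (wtv x)) (m : ℕ) (hmn : m ≤ n)
    (hT : (((Finset.range (n+1)).filter (fun i => w i = 1))).card ≤ m) :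
    ∃ g : (Fin n → ZMod 2) → ZMod 2, g ≠ 0 ∧ funcDeg g ≤ m ∧ F * g = 0 := by
  classical
  set T : Finset ℕ := (Finset.range (n+1)).filter (fun i => w i = 1) with hTdef
  -- the linear map sending coefficients to values on T
  let φ : (Fin (m+1) → ZMod 2) →ₗ[ZMod 2] (↥T → ZMod 2) :=
    { toFun := fun c t => ∑ i : Fin (m+1), c i * (((t : ℕ)).choose i : ZMod 2)
      map_add' := by
        intro a b; funext t
        simp [add_mul, Finset.sum_add_distrib]
      map_smul' := by
        intro r a; funext t
        simp [Finset.mul_sum, mul_assoc] }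
  have hnotinj : ¬ Function.Injective φ := by
    intro hinj
    have h1 := LinearMap.finrank_le_finrank_of_injective hinj
    rw [Module.finrank_pi, Module.finrank_pi, Fintype.card_fin, Fintype.card_coe] at h1
    omega
  rw [Function.not_injective_iff] at hnotinj
  obtain ⟨c₁, c₂, hceq, hcne⟩ := hnotinj
  set c : Fin (m+1) → ZMod 2 := c₁ - c₂ with hcdef
  have hc0 : c ≠ 0 := sub_ne_zero.mpr hcne
  have hcT : ∀ t ∈ T, ∑ i : Fin (m+1), c i * ((t : ℕ).choose i : ZMod 2) = 0 := by
    intro t ht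
    have hφ : φ c = 0 := by rw [hcdef, map_sub, hceq, sub_self]
    exact congrFun hφ ⟨t, ht⟩
  -- the least nonzero coefficient
  set S : Finset (Fin (m+1)) := Finset.univ.filter (fun i => c i ≠ 0) with hSdef
  have hSne : S.Nonempty := by
    obtain ⟨i, hi⟩ := Function.ne_iff.mp hc0
    exact ⟨i, Finset.mem_filter.mpr ⟨Finset.mem_univ i, hi⟩⟩
  set j : Fin (m+1) := S.min' hSne with hjdef
  have hcj : c j ≠ 0 := (Finset.mem_filter.mp (S.min'_mem hSne)).2
  have hmin : ∀ i : Fin (m+1), i < j → c i = 0 := by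
    intro i hij
    by_contra hci
    exact absurd (S.min'_le i (Finset.mem_filter.mpr ⟨Finset.mem_univ i, hci⟩)) (not_le.mpr hij)
  -- the annihilator
  set g : (Fin n → ZMod 2) → ZMod 2 :=
    fun x => ∑ i : Fin (m+1), c i * ((wtv x).choose i : ZMod 2) with hgdef
  have hjn : (j : ℕ) ≤ n := le_trans (Nat.le_of_lt_succ j.isLt) hmn
  -- g is nonzero
  have hgne : g ≠ 0 := by
    set x₀ : Fin n → ZMod 2 := fun t => if (t : ℕ) < (j : ℕ) then 1 else 0 with hx₀
    have hwt : wtv x₀ = (j : ℕ) := by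
      have heq : (Finset.univ.filter (fun t : Fin n => x₀ t = 1))
          = Finset.univ.filter (fun t : Fin n => (t : ℕ) < (j : ℕ)) := by
        apply Finset.filter_congr
        intro t _
        show (if (t : ℕ) < (j : ℕ) then (1 : ZMod 2) else 0) = 1 ↔ (t : ℕ) < (j : ℕ)
        split_ifs with h
        · exact iff_of_true rfl h
        · exact iff_of_false (by decide) h
      rw [wtv, heq, card_filter_val_lt hjn]
    intro hg0
    have hz : g x₀ = 0 := by rw [hg0]; rfl
    rw [hgdef] at hz
    simp only [hwt] at hz
    rw [Finset.sum_eq_single j] at hz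
    · rw [Nat.choose_self, Nat.cast_one, mul_one] at hz
      exact hcj hz
    · intro i _ hij
      rcases lt_or_gt_of_ne hij with h | h
      · rw [hmin i h, zero_mul]
      · rw [Nat.choose_eq_zero_of_lt (by exact_mod_cast h), Nat.cast_zero, mul_zero]
    · intro h; exact absurd (Finset.mem_univ j) h
  -- g has degree at most m
  have hgdeg : funcDeg g ≤ m := by
    apply Nat.sInf_le
    refine ⟨∑ i : Fin (m+1), MvPolynomial.C (c i) * MvPolynomial.esymm (Fin n) (ZMod 2) i,
      ?_, ?_⟩
    · apply MvPolynomial.totalDegree_finsetSum_le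
      intro i _
      calc (MvPolynomial.C (c i) * MvPolynomial.esymm (Fin n) (ZMod 2) i).totalDegree
          ≤ (MvPolynomial.C (c i) : MvPolynomial (Fin n) (ZMod 2)).totalDegree
            + (MvPolynomial.esymm (Fin n) (ZMod 2) i).totalDegree :=
            MvPolynomial.totalDegree_mul _ _
        _ ≤ 0 + i := by
            gcongr
            · exact le_of_eq (MvPolynomial.totalDegree_C _)
            · exact esymm_totalDegree_le i
        _ ≤ m := by simpa using Nat.le_of_lt_succ i.isLt
    · intro x
      rw [map_sum, hgdef]
      apply Finset.sum_congr rfl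
      intro i _
      rw [MvPolynomial.eval_mul, MvPolynomial.eval_C, eval_esymm]
  -- g annihilates F
  have hann : F * g = 0 := by
    funext x
    simp only [Pi.mul_apply, Pi.zero_apply]
    rcases zmod2_cases (F x) with h0 | h1
    · rw [h0, zero_mul]
    · have hwt_mem : wtv x ∈ T := by
        rw [hTdef]
        refine Finset.mem_filter.mpr ⟨Finset.mem_range.mpr ?_, ?_⟩
        · have hle : wtv x ≤ n := by
            rw [wtv]
            calc _ ≤ (Finset.univ : Finset (Fin n)).card := Finset.card_filter_le _ _
              _ = n := by simp
          omega
        · rw [← hw x]; exact h1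
      have hz : g x = 0 := by rw [hgdef]; exact hcT _ hwt_mem
      rw [hz, mul_zero]
  exact ⟨g, hgne, hgdeg, hann⟩
lemma AI_le {n : ℕ} (f g : (Fin n → ZMod 2) → ZMod 2) (hg : g ≠ 0)
    (h : f * g = 0 ∨ (f + 1) * g = 0) : AI f ≤ funcDeg g :=
  Nat.sInf_le ⟨g, hg, rfl, h⟩
theorem stmt6' (k : ℕ) {n : ℕ} (hn : n = 2 * k)
    (f : (Fin n → ZMod 2) → ZMod 2)
    (v : ℕ → ZMod 2) (hv : ∀ x, f x = v (wtv x))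
    (hAI : AI f = k) :
    ((Finset.range (n+1)).filter (fun i => v i = 1)).card = k ∨
    ((Finset.range (n+1)).filter (fun i => v i = 1)).card = k + 1 := by
  classical
  set C := ((Finset.range (n+1)).filter (fun i => v i = 1)).card with hC
  have hCle : C ≤ n + 1 := le_trans (Finset.card_filter_le _ _) (by simp)
  by_contra hcon
  push_neg at hcon
  obtain ⟨h1, h2⟩ := hcon
  rcases lt_or_ge C k with hlt | hge
  · -- C ≤ k - 1 : annihilator of f
    have hk1 : 1 ≤ k := by omega
    obtain ⟨g, hg0, hgdeg, hann⟩ := exists_annihilator f v hv (k-1) (by omega) (by omega)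
    have := AI_le f g hg0 (Or.inl hann)
    omega
  · -- C ≥ k + 2 : annihilator of f + 1
    have hge2 : k + 2 ≤ C := by omega
    set w : ℕ → ZMod 2 := fun i => v i + 1 with hw
    have hw' : ∀ x, (f + 1) x = w (wtv x) := by
      intro x
      simp only [Pi.add_apply, Pi.one_apply, hw, hv x]
    have hcard : ((Finset.range (n+1)).filter (fun i => w i = 1)).card = n + 1 - C := by
      have hiff : ∀ i, w i = 1 ↔ ¬ (v i = 1) := by
        intro i
        have hrfl : w i = v i + 1 := rfl
        rw [hrfl]
        rcases zmod2_cases (v i) with h | h <;> rw [h] <;> decide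
      have := Finset.card_filter_add_card_filter_not
        (s := Finset.range (n+1)) (p := fun i => v i = 1)
      rw [Finset.filter_congr (fun i _ => hiff i)]
      simp only [Finset.card_range] at this ⊢
      omega
    obtain ⟨g, hg0, hgdeg, hann⟩ := exists_annihilator (f + 1) w hw' (k-1) (by omega) (by omega)
    have := AI_le f g hg0 (Or.inr hann)
    omega

theorem stmt6 (k : ℕ) {n : ℕ} (hn : n = 2 * k)
    (f : (Fin n → ZMod 2) → ZMod 2) (hf : SymmF f)
    (v : ℕ → ZMod 2) (hv : ∀ x, f x = v (wtv x))
    (hAI : AI f = k) :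
    ((Finset.range (n+1)).filter (fun i => v i = 1)).card = k ∨
    ((Finset.range (n+1)).filter (fun i => v i = 1)).card = k + 1 := by
  exact stmt6' k hn f v hv hAI
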